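/- Let α ∈ (0,1), γ > 0 and θ < -1. Then the function y ↦ (y-γ)^α + θ·y^α on (γ, ∞) attains its unique global maximum at y* = γ / (1 - |θ|^{-1/(1-α)}), and moreover for every q ≥ 0 the equation α[(y-γ)^{α-1} + θ y^{α-1}] = q admits a unique solution y ∈ (γ, ∞). -/

import Mathlib

set_option maxHeartbeats 1000000

theorem stmt4 (α γ θ : ℝ) (hα : α ∈ Set.Ioo (0:ℝ) 1) (hγ : 0 < γ) (hθ : θ < -1)
    (ystar : ℝ) (hystar : ystar = γ / (1 - |θ| ^ (-(1 / (1 - α))))) :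
    ystar ∈ Set.Ioi γ ∧
    (∀ y ∈ Set.Ioi γ, y ≠ ystar →
      (y - γ) ^ α + θ * y ^ α < (ystar - γ) ^ α + θ * ystar ^ α) ∧
    (∀ q : ℝ, 0 ≤ q →
      ∃! y : ℝ, y ∈ Set.Ioi γ ∧ α * ((y - γ) ^ (α - 1) + θ * y ^ (α - 1)) = q) := by
  obtain ⟨hα0, hα1⟩ := hα
  have hβ : α - 1 < 0 := by linarith
  have h1α : (0:ℝ) < 1 - α := by linarith
  set s : ℝ := -θ with hs_def
  have hs : 1 < s := by simp only [hs_def]; linarith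
  have hs0 : (0:ℝ) < s := by linarith
  have hθs : θ = -s := by simp [hs_def]
  have habs : |θ| = s := abs_of_neg (by linarith)
  set c : ℝ := s ^ (-(1 / (1 - α))) with hc_def
  have hc0 : 0 < c := Real.rpow_pos_of_pos hs0 _
  have hc1 : c < 1 :=
    Real.rpow_lt_one_of_one_lt_of_neg hs (neg_lt_zero.mpr (by positivity))
  have h1c0 : 0 < 1 - c := by linarith
  have hys : ystar = γ / (1 - c) := by rw [hystar, habs]
  have hyγ : γ < ystar := by
    rw [hys, lt_div_iff₀ h1c0]; nlinarith
  have hy0 : 0 < ystar := hγ.trans hyγ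
  have hcα : c ^ (α - 1) = s := by
    rw [hc_def, ← Real.rpow_mul hs0.le,
      show (-(1 / (1 - α))) * (α - 1) = 1 by field_simp; ring]
    exact Real.rpow_one s
  -- key decomposition
  have hkey : ∀ y : ℝ, γ < y → (y - γ) ^ (α - 1) = ((y - γ) / y) ^ (α - 1) * y ^ (α - 1) := by
    intro y hy
    have hy0' : (0:ℝ) < y := hγ.trans hy
    have hyp : (0:ℝ) < y ^ (α - 1) := Real.rpow_pos_of_pos hy0' _
    rw [Real.div_rpow (by linarith) hy0'.le, div_mul_cancel₀ _ hyp.ne']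
  have hy_eq : ystar - γ = c * ystar := by
    rw [hys]; field_simp; ring
  have hu_lt : ∀ y : ℝ, γ < y → y < ystar → (y - γ) / y < c := by
    intro y h1 h2
    rw [div_lt_iff₀ (by linarith : (0:ℝ) < y)]
    nlinarith
  have hu_gt : ∀ y : ℝ, ystar < y → c < (y - γ) / y := by
    intro y h2
    have h1 : γ < y := hyγ.trans h2
    rw [lt_div_iff₀ (by linarith : (0:ℝ) < y)]
    nlinarith
  have hu_le : ∀ y : ℝ, γ < y → y ≤ ystar → (y - γ) / y ≤ c := by
    intro y h1 h2
    rw [div_le_iff₀ (by linarith : (0:ℝ) < y)]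
    nlinarith
  -- comparisons
  have hglt : ∀ y : ℝ, γ < y → y < ystar → s * y ^ (α - 1) < (y - γ) ^ (α - 1) := by
    intro y h1 h2
    have hy0' : (0:ℝ) < y := hγ.trans h1
    have hyp : (0:ℝ) < y ^ (α - 1) := Real.rpow_pos_of_pos hy0' _
    have hupos : (0:ℝ) < (y - γ) / y := div_pos (by linarith) hy0'
    have h3 : c ^ (α - 1) < ((y - γ) / y) ^ (α - 1) :=
      Real.rpow_lt_rpow_of_neg hupos (hu_lt y h1 h2) hβ
    rw [hkey y h1, ← hcα]
    exact mul_lt_mul_of_pos_right h3 hyp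
  have hggt : ∀ y : ℝ, ystar < y → (y - γ) ^ (α - 1) < s * y ^ (α - 1) := by
    intro y h2
    have h1 : γ < y := hyγ.trans h2
    have hy0' : (0:ℝ) < y := hγ.trans h1
    have hyp : (0:ℝ) < y ^ (α - 1) := Real.rpow_pos_of_pos hy0' _
    have h3 : ((y - γ) / y) ^ (α - 1) < c ^ (α - 1) :=
      Real.rpow_lt_rpow_of_neg hc0 (hu_gt y h2) hβ
    rw [hkey y h1, ← hcα]
    exact mul_lt_mul_of_pos_right h3 hyp
  have hgeq : (ystar - γ) ^ (α - 1) = s * ystar ^ (α - 1) := by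
    have : (ystar - γ) / ystar = c := by
      rw [hy_eq, mul_div_assoc, div_self hy0.ne', mul_one]
    rw [hkey ystar hyγ, this, hcα]
  -- g and its strict antitonicity on Ioc γ ystar
  set g : ℝ → ℝ := fun y => (y - γ) ^ (α - 1) + θ * y ^ (α - 1) with hg_def
  have hg_eq : ∀ y : ℝ, g y = (y - γ) ^ (α - 1) - s * y ^ (α - 1) := by
    intro y; simp only [hg_def, hθs]; ring
  have hganti : StrictAntiOn g (Set.Ioc γ ystar) := by
    intro y1 hy1 y2 hy2 h12
    have hy10 : (0:ℝ) < y1 := hγ.trans hy1.1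
    have hy20 : (0:ℝ) < y2 := hγ.trans hy2.1
    set P1 := y1 ^ (α - 1) with hP1
    set P2 := y2 ^ (α - 1) with hP2
    set A1 := ((y1 - γ) / y1) ^ (α - 1) - s with hA1
    set A2 := ((y2 - γ) / y2) ^ (α - 1) - s with hA2
    have hP2pos : 0 < P2 := Real.rpow_pos_of_pos hy20 _
    have hP21 : P2 < P1 := Real.rpow_lt_rpow_of_neg hy10 h12 hβ
    have hu1pos : (0:ℝ) < (y1 - γ) / y1 := div_pos (by linarith [hy1.1]) hy10
    have hu12 : (y1 - γ) / y1 < (y2 - γ) / y2 := by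
      rw [div_lt_div_iff₀ hy10 hy20]; nlinarith [hy1.1]
    have hA12 : A2 < A1 := by
      have := Real.rpow_lt_rpow_of_neg hu1pos hu12 hβ
      simp only [hA1, hA2]; linarith
    have hA2nn : 0 ≤ A2 := by
      have h2c : (y2 - γ) / y2 ≤ c := hu_le y2 hy2.1 hy2.2
      have : c ^ (α - 1) ≤ ((y2 - γ) / y2) ^ (α - 1) :=
        Real.rpow_le_rpow_of_nonpos (div_pos (by linarith [hy2.1]) hy20) h2c hβ.le
      simp only [hA2]; rw [hcα] at this; linarith
    have hgy1 : g y1 = P1 * A1 := by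
      rw [hg_eq, hkey y1 hy1.1]; simp only [hP1, hA1]; ring
    have hgy2 : g y2 = P2 * A2 := by
      rw [hg_eq, hkey y2 hy2.1]; simp only [hP2, hA2]; ring
    rw [hgy1, hgy2]
    nlinarith
  -- derivative of f
  set f : ℝ → ℝ := fun y => (y - γ) ^ α + θ * y ^ α with hf_def
  have hderiv : ∀ y : ℝ, γ < y → HasDerivAt f (α * g y) y := by
    intro y hy
    have hy0' : (0:ℝ) < y := hγ.trans hy
    have h1 : HasDerivAt (fun y : ℝ => y - γ) 1 y := (hasDerivAt_id y).sub_const γ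
    have h2 : HasDerivAt (fun x : ℝ => x ^ α) (α * (y - γ) ^ (α - 1)) (y - γ) :=
      Real.hasDerivAt_rpow_const (Or.inl (by linarith : (0:ℝ) < y - γ).ne')
    have h3 : HasDerivAt (fun y : ℝ => (y - γ) ^ α) (α * (y - γ) ^ (α - 1) * 1) y :=
      by have := h2.comp y h1; exact this
    have h4 : HasDerivAt (fun y : ℝ => y ^ α) (α * y ^ (α - 1)) y :=
      Real.hasDerivAt_rpow_const (Or.inl hy0'.ne')
    have h5 := h3.add (h4.const_mul θ)
    refine h5.congr_deriv ?_
    simp only [hg_def]; ring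
  -- monotonicity of f
  have hmono : StrictMonoOn f (Set.Ioc γ ystar) := by
    apply strictMonoOn_of_deriv_pos (convex_Ioc γ ystar)
    · intro y hy
      exact ((hderiv y hy.1).continuousAt).continuousWithinAt
    · intro y hy
      rw [interior_Ioc] at hy
      rw [(hderiv y hy.1).deriv]
      have := hglt y hy.1 hy.2
      have := hg_eq y
      nlinarith
  have hanti : StrictAntiOn f (Set.Ici ystar) := by
    apply strictAntiOn_of_deriv_neg (convex_Ici ystar)
    · intro y hy
      exact ((hderiv y (hyγ.trans_le hy)).continuousAt).continuousWithinAt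
    · intro y hy
      rw [interior_Ici] at hy
      rw [(hderiv y (hyγ.trans hy)).deriv]
      have := hggt y hy
      have := hg_eq y
      nlinarith
  refine ⟨hyγ, ?_, ?_⟩
  · intro y hy hne
    rcases lt_or_gt_of_ne hne with h | h
    · exact hmono ⟨hy, h.le⟩ ⟨hyγ, le_refl _⟩ h
    · exact hanti (Set.self_mem_Ici) (le_of_lt h) h
  · intro q hq
    set m : ℝ := q / α with hm_def
    have hmnn : 0 ≤ m := div_nonneg hq hα0.le
    have hgys : g ystar = 0 := by rw [hg_eq, hgeq]; ring
    -- find a point a with g a ≥ m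
    set M : ℝ := m + s * γ ^ (α - 1) with hM_def
    have hMpos : 0 < M := by
      have : (0:ℝ) < γ ^ (α - 1) := Real.rpow_pos_of_pos hγ _
      have : 0 < s * γ ^ (α - 1) := by positivity
      simp only [hM_def]; linarith
    set ε : ℝ := min ((ystar - γ) / 2) (M ^ (-(1 / (1 - α)))) with hε_def
    have hεpos : 0 < ε := by
      apply lt_min (by linarith)
      exact Real.rpow_pos_of_pos hMpos _
    set a : ℝ := γ + ε with ha_def
    have haγ : γ < a := by simp only [ha_def]; linarith
    have ha0 : 0 < a := hγ.trans haγ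
    have hays : a ≤ ystar := by
      have := min_le_left ((ystar - γ) / 2) (M ^ (-(1 / (1 - α))))
      simp only [ha_def]; linarith [hεpos, this]
    have hga : m ≤ g a := by
      have hεM : ε ≤ M ^ (-(1 / (1 - α))) := min_le_right _ _
      have h1 : M ≤ ε ^ (α - 1) := by
        have h2 : (M ^ (-(1 / (1 - α)))) ^ (α - 1) ≤ ε ^ (α - 1) :=
          Real.rpow_le_rpow_of_nonpos hεpos hεM hβ.le
        have h3 : (M ^ (-(1 / (1 - α)))) ^ (α - 1) = M := by
          rw [← Real.rpow_mul hMpos.le,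
            show (-(1 / (1 - α))) * (α - 1) = 1 by field_simp; ring]
          exact Real.rpow_one M
        linarith [h3 ▸ h2]
      have h4 : a ^ (α - 1) ≤ γ ^ (α - 1) :=
        Real.rpow_le_rpow_of_nonpos hγ haγ.le hβ.le
      have h5 : s * a ^ (α - 1) ≤ s * γ ^ (α - 1) := by nlinarith
      have h6 : a - γ = ε := by simp [ha_def]
      rw [hg_eq, h6]
      simp only [hM_def] at h1
      linarith
    -- IVT
    have hcont : ContinuousOn g (Set.Icc a ystar) := by
      intro y hy
      have hyγ' : γ < y := haγ.trans_le hy.1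
      have hy0' : (0:ℝ) < y := hγ.trans hyγ'
      apply ContinuousAt.continuousWithinAt
      have c1 : ContinuousAt (fun y : ℝ => (y - γ) ^ (α - 1)) y :=
        ((continuous_sub_right γ).continuousAt).rpow_const
          (Or.inl (by linarith : (0:ℝ) < y - γ).ne')
      have c2 : ContinuousAt (fun y : ℝ => θ * y ^ (α - 1)) y :=
        (continuousAt_id.rpow_const (Or.inl hy0'.ne')).const_mul θ
      exact c1.add c2
    have hm_mem : m ∈ Set.Icc (g ystar) (g a) := ⟨by rw [hgys]; exact hmnn, hga⟩
    obtain ⟨y, hy_mem, hy_eq⟩ := intermediate_value_Icc' hays hcont hm_mem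
    have hyγ'' : γ < y := haγ.trans_le hy_mem.1
    have hαne : α ≠ 0 := hα0.ne'
    refine ⟨y, ⟨hyγ'', ?_⟩, ?_⟩
    · show α * g y = q
      rw [hy_eq, hm_def]; field_simp
    · rintro y' ⟨hy'γ, hy'eq⟩
      have hgy' : g y' = m := by
        have : α * g y' = q := hy'eq
        rw [hm_def]; field_simp at this ⊢; linarith
      have hy'le : y' ≤ ystar := by
        by_contra h
        push_neg at h
        have := hggt y' h
        have := hg_eq y'
        nlinarith
      have hyle : y ≤ ystar := hy_mem.2
      exact hganti.injOn ⟨hy'γ, hy'le⟩ ⟨hyγ'', hyle⟩ (by rw [hgy', hy_eq])
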